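/- Tightness of the ℓp-centerpoint theorem for p ∈ (1,∞): for the point set P_d = {0, e_1, ..., e_d} ⊆ [0,1]^d consisting of the origin and the d standard unit vectors, every point c ∈ ℝ^d admits a unit direction v ∈ S^{d-1} such that |H^p_{c,v} ∩ P_d| ≤ 1 = |P_d|/(d+1). -/

import Mathlib

open scoped ENNReal

noncomputable def pnorm {d : ℕ} (p : ℝ≥0∞) [Fact (1 ≤ p)] (x : Fin d → ℝ) : ℝ :=
  ‖(WithLp.equiv p (Fin d → ℝ)).symm x‖

def Hp {d : ℕ} (p : ℝ≥0∞) [Fact (1 ≤ p)] (x v : Fin d → ℝ) : Set (Fin d → ℝ) :=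
  {z | ∀ ε : ℝ, 0 < ε → pnorm p (x - z) ≤ pnorm p (x - ε • v - z)}

private lemma pnorm_eq {d : ℕ} (p : ℝ≥0∞) [Fact (1 ≤ p)] (hp : 0 < p.toReal)
    (x : Fin d → ℝ) : pnorm p x = (∑ j, |x j| ^ p.toReal) ^ (1 / p.toReal) := by
  rw [pnorm, PiLp.norm_eq_sum hp]
  simp [Real.norm_eq_abs, WithLp.equiv_symm_apply, PiLp.toLp_apply]

theorem centerpoint_tightness {d : ℕ} (hd : 0 < d) (p : ℝ≥0∞) [Fact (1 ≤ p)]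
    (hp1 : 1 < p) (hp2 : p ≠ ⊤) (c : Fin d → ℝ) :
    ∃ v : Fin d → ℝ, pnorm 2 v = 1 ∧
      ((Hp p c v ∩ (insert 0 {z : Fin d → ℝ | ∃ i, z = Pi.single i 1})).ncard : ℝ) ≤ 1 := by
  have h2 : (0:ℝ) < (2 : ℝ≥0∞).toReal := by norm_num
  have hq : 1 < p.toReal := by
    rw [← ENNReal.toReal_one]
    exact (ENNReal.toReal_lt_toReal (by simp) hp2).mpr hp1
  set q := p.toReal with hqdef
  have hq0 : 0 < q := lt_trans one_pos hq
  set P : Set (Fin d → ℝ) := insert 0 {z | ∃ i, z = Pi.single i 1} with hP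
  -- A criterion for non-membership in Hp
  have hnotmem : ∀ (v z : Fin d → ℝ) (ε : ℝ), 0 < ε →
      (∑ j, |(c - ε • v - z) j| ^ q) < (∑ j, |(c - z) j| ^ q) → z ∉ Hp p c v := by
    intro v z ε hε hlt hmem
    have h1 := hmem ε hε
    rw [pnorm_eq p hq0, pnorm_eq p hq0] at h1
    have h3 : ((∑ j, |(c - ε • v - z) j| ^ q) ^ (1/q) : ℝ)
        < (∑ j, |(c - z) j| ^ q) ^ (1/q) :=
      Real.rpow_lt_rpow (by positivity) hlt (by positivity)
    linarith
  -- the final counting step, given a subset witness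
  have hcount : ∀ (v : Fin d → ℝ) (w : Fin d → ℝ), Hp p c v ∩ P ⊆ {w} →
      ((Hp p c v ∩ P).ncard : ℝ) ≤ 1 := by
    intro v w hsub
    have := Set.ncard_le_ncard hsub (Set.finite_singleton w)
    simp only [Set.ncard_singleton] at this
    exact_mod_cast this
  by_cases hc : c = 0
  · -- c = 0 : take v with all coordinates -1/√d
    subst hc
    have hD : (1:ℝ) ≤ (d:ℝ) := by exact_mod_cast hd
    have hD0 : (0:ℝ) < (d:ℝ) := by linarith
    set v : Fin d → ℝ := fun _ => -((Real.sqrt d)⁻¹) with hv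
    have hsd : (0:ℝ) < Real.sqrt d := Real.sqrt_pos.mpr hD0
    refine ⟨v, ?_, ?_⟩
    · rw [pnorm_eq 2 h2]
      have : ∀ j : Fin d, |v j| ^ (2:ℝ≥0∞).toReal = ((d:ℝ))⁻¹ := by
        intro j
        have ht : (2:ℝ≥0∞).toReal = ((2:ℕ):ℝ) := by norm_num
        rw [hv, ht, Real.rpow_natCast]
        simp only [abs_neg, abs_inv, abs_of_pos hsd]
        rw [inv_pow, Real.sq_sqrt hD0.le]
      rw [Finset.sum_congr rfl (fun j _ => this j)]
      rw [Finset.sum_const, Finset.card_univ, Fintype.card_fin, nsmul_eq_mul,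
        mul_inv_cancel₀ hD0.ne', Real.one_rpow]
    · apply hcount v 0
      rintro z ⟨hzH, hzP⟩
      rcases hzP with rfl | ⟨i, rfl⟩
      · rfl
      · exfalso
        set w : Fin d → ℝ := Pi.single i 1 with hw
        -- choose t small
        set t : ℝ := min (1/2) ((1/(2*(d:ℝ))) ^ ((1/(q-1)) : ℝ)) with htdef
        have ht0 : 0 < t := by
          apply lt_min (by norm_num)
          apply Real.rpow_pos_of_pos
          positivity
        have ht12 : t ≤ 1/2 := min_le_left _ _
        have htq1 : t ^ (q - 1) ≤ 1/(2*(d:ℝ)) := by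
          calc t ^ (q-1) ≤ ((1/(2*(d:ℝ))) ^ ((1/(q-1)) : ℝ)) ^ (q-1) := by
                apply Real.rpow_le_rpow ht0.le (min_le_right _ _) (by linarith)
            _ = 1/(2*(d:ℝ)) := by
                rw [← Real.rpow_mul (by positivity),
                  one_div_mul_cancel (show q - 1 ≠ 0 by linarith), Real.rpow_one]
        set ε : ℝ := t * Real.sqrt d with hε
        refine hnotmem v w ε (by positivity) ?_ hzH
        have hcoord : ∀ j : Fin d, ((0 : Fin d → ℝ) - ε • v - w) j = t - w j := by
          intro j
          simp only [Pi.sub_apply, Pi.zero_apply, Pi.smul_apply, hv, smul_eq_mul, hε]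
          rw [mul_neg, mul_assoc, mul_inv_cancel₀ hsd.ne', mul_one]
          ring
        have hRHS : (∑ j, |((0 : Fin d → ℝ) - w) j| ^ q) = 1 := by
          have hterm : ∀ j : Fin d, |((0 : Fin d → ℝ) - w) j| ^ q
              = if j = i then (1:ℝ) else 0 := by
            intro j
            by_cases h : j = i
            · subst h; simp [hw, Pi.single_eq_same, Real.one_rpow]
            · simp [hw, Pi.single_eq_of_ne h, Real.zero_rpow hq0.ne', h]
          rw [Finset.sum_congr rfl (fun j _ => hterm j)]
          simp
        have hLHS : (∑ j, |((0 : Fin d → ℝ) - ε • v - w) j| ^ q)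
            = (1 - t) ^ q + ((d:ℝ) - 1) * t ^ q := by
          rw [Finset.sum_congr rfl (fun j _ => by rw [hcoord j])]
          rw [← Finset.add_sum_erase Finset.univ _ (Finset.mem_univ i)]
          have h1 : |t - w i| ^ q = (1 - t) ^ q := by
            rw [hw, Pi.single_eq_same]
            congr 1
            rw [abs_of_nonpos (by linarith)]; ring
          have h2 : ∀ j ∈ Finset.univ.erase i, |t - w j| ^ q = t ^ q := by
            intro j hj
            rw [hw, Pi.single_eq_of_ne (Finset.ne_of_mem_erase hj), sub_zero,
              abs_of_pos ht0]
          rw [h1, Finset.sum_congr rfl h2, Finset.sum_const, nsmul_eq_mul,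
            Finset.card_erase_of_mem (Finset.mem_univ i), Finset.card_univ,
            Fintype.card_fin, Nat.cast_sub hd, Nat.cast_one]
        rw [hRHS, hLHS]
        -- now the analytic inequality
        have hA : (1 - t) ^ q ≤ 1 - t :=
          (Real.rpow_le_rpow_of_exponent_ge (by linarith) (by linarith) hq.le).trans_eq
            (Real.rpow_one _)
        have hB : t ^ q = t * t ^ (q - 1) := by
          nth_rewrite 2 [← Real.rpow_one t]
          rw [← Real.rpow_add ht0]
          norm_num
        have htq_pos : 0 ≤ t ^ (q-1) := Real.rpow_nonneg ht0.le _
        have hC : ((d:ℝ) - 1) * t ^ q ≤ (d:ℝ) * (t * (1/(2*(d:ℝ)))) := by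
          rw [hB]
          calc ((d:ℝ) - 1) * (t * t ^ (q-1)) ≤ (d:ℝ) * (t * t ^ (q-1)) := by
                apply mul_le_mul_of_nonneg_right (by linarith) (by positivity)
            _ ≤ (d:ℝ) * (t * (1/(2*(d:ℝ)))) := by
                apply mul_le_mul_of_nonneg_left _ hD0.le
                exact mul_le_mul_of_nonneg_left htq1 ht0.le
        have hDhalf : (d:ℝ) * (t * (1/(2*(d:ℝ)))) = t/2 := by
          field_simp
        rw [hDhalf] at hC
        linarith
  · -- c ≠ 0 : pick k with c k ≠ 0
    obtain ⟨k, hk⟩ := Function.ne_iff.mp hc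
    simp only [Pi.zero_apply] at hk
    set s : ℝ := if 0 < c k then 1 else -1 with hs
    have hsck : |c k| * s = c k := by
      rcases lt_trichotomy (c k) 0 with h | h | h
      · rw [hs, if_neg (by linarith), abs_of_neg h]; ring
      · exact absurd h hk
      · rw [hs, if_pos h, abs_of_pos h]; ring
    set v : Fin d → ℝ := Pi.single k s with hv
    have habs_s : |s| = 1 := by
      rcases le_or_gt (c k) 0 with h | h
      · rw [hs, if_neg (not_lt.mpr h)]; norm_num
      · rw [hs, if_pos h]; norm_num
    refine ⟨v, ?_, ?_⟩
    · rw [pnorm_eq 2 h2]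
      have : ∀ j : Fin d, |v j| ^ (2:ℝ≥0∞).toReal = if j = k then (1:ℝ) else 0 := by
        intro j
        by_cases h : j = k
        · subst h; simp [hv, Pi.single_eq_same, habs_s, Real.one_rpow]
        · simp [hv, Pi.single_eq_of_ne h, Real.zero_rpow (by norm_num : (2:ℝ≥0∞).toReal ≠ 0), h]
      rw [Finset.sum_congr rfl (fun j _ => this j)]
      simp
    · apply hcount v (Pi.single k 1)
      rintro z ⟨hzH, hzP⟩
      -- it suffices to exclude any z with z k = 0
      have key : ∀ z : Fin d → ℝ, z k = 0 → z ∉ Hp p c v := by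
        intro z hzk
        refine hnotmem v z |c k| (abs_pos.mpr hk) ?_
        have h1 : (c - |c k| • v - z) k = 0 := by
          simp only [Pi.sub_apply, Pi.smul_apply, hv, Pi.single_eq_same, smul_eq_mul,
            hsck, hzk]
          ring
        apply Finset.sum_lt_sum
        · intro j _
          by_cases h : j = k
          · rw [h, h1]
            simp only [abs_zero, Real.zero_rpow hq0.ne']
            positivity
          · have h3 : (c - |c k| • v - z) j = (c - z) j := by
              simp only [Pi.sub_apply, Pi.smul_apply, hv, Pi.single_eq_of_ne h,
                smul_eq_mul, mul_zero, sub_zero]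
            rw [h3]
        · refine ⟨k, Finset.mem_univ k, ?_⟩
          have h2 : (c - z) k = c k := by simp [hzk]
          rw [h1, h2]
          simp only [abs_zero, Real.zero_rpow hq0.ne']
          exact Real.rpow_pos_of_pos (abs_pos.mpr hk) q
      rcases hzP with rfl | ⟨i, rfl⟩
      · exact absurd hzH (key 0 rfl)
      · by_cases h : i = k
        · subst h; rfl
        · exact absurd hzH (key _ (Pi.single_eq_of_ne (Ne.symm h) 1))
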